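/- Let n ≥ 1 and let P be a nonzero Laurent polynomial in n variables with real coefficients and support M ⊆ ℤⁿ. Let H_ℝ = {x ∈ (ℝ∖{0})ⁿ : P(x) = 0} and let A^ℝ = {(log|x₁|, …, log|xₙ|) : x ∈ H_ℝ} ⊆ ℝⁿ. Let N be the cardinality of the set of functions {α ↦ ε₁^{α₁}⋯εₙ^{αₙ} : ε ∈ {−1, 1}ⁿ} from M to {−1, 1} (so N = 2^{κ_M} in the notation of the paper). Then for every line L ⊆ ℝⁿ whose direction vector can be chosen in ℤⁿ and such that L ∩ A^ℝ is finite, the cardinality of L ∩ A^ℝ is at most N·(#M − 1). -/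

import Mathlib

open Real

lemma rolle_count (Z D : Set ℝ) (hD : D.Finite)
    (h : ∀ a ∈ Z, ∀ b ∈ Z, a < b → ∃ d ∈ D, a < d ∧ d < b) :
    Z.Finite ∧ Z.ncard ≤ D.ncard + 1 := by
  have key : ∀ T : Finset ℝ, ↑T ⊆ Z → T.card ≤ D.ncard + 1 := by
    intro T hT
    by_contra hlt
    push_neg at hlt
    set m := T.card with hm
    have hm2 : D.ncard + 2 ≤ m := hlt
    have e := T.orderIsoOfFin hm.symm
    have hlt' : ∀ k : Fin (m - 1), (k : ℕ) < m ∧ (k : ℕ) + 1 < m := by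
      intro k; have := k.2; omega
    have hch : ∀ k : Fin (m - 1), ∃ d ∈ D,
        (e ⟨k, (hlt' k).1⟩ : ℝ) < d ∧ d < (e ⟨(k : ℕ) + 1, (hlt' k).2⟩ : ℝ) := by
      intro k
      refine h _ (hT (e ⟨k, (hlt' k).1⟩).2) _ (hT (e ⟨(k : ℕ) + 1, (hlt' k).2⟩).2) ?_
      have : (⟨(k : ℕ), (hlt' k).1⟩ : Fin m) < ⟨(k : ℕ) + 1, (hlt' k).2⟩ := by
        simp [Fin.lt_def]
      exact_mod_cast e.strictMono this
    choose ψ hψD hψl hψr using hch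
    have hmono : StrictMono ψ := by
      intro k k' hkk
      have hkk' : (k : ℕ) < (k' : ℕ) := hkk
      have h1 : ψ k < (e ⟨(k : ℕ) + 1, (hlt' k).2⟩ : ℝ) := hψr k
      have h2 : (e ⟨(k : ℕ) + 1, (hlt' k).2⟩ : ℝ) ≤ (e ⟨(k' : ℕ), (hlt' k').1⟩ : ℝ) := by
        have : (⟨(k : ℕ) + 1, (hlt' k).2⟩ : Fin m) ≤ ⟨(k' : ℕ), (hlt' k').1⟩ := by
          simp [Fin.le_def]; omega
        exact_mod_cast e.le_iff_le.2 this
      exact lt_of_lt_of_le h1 (le_of_lt (lt_of_le_of_lt h2 (hψl k')))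
    have hcard : m - 1 ≤ D.ncard := by
      have : (Finset.univ : Finset (Fin (m - 1))).card ≤ hD.toFinset.card := by
        apply Finset.card_le_card_of_injOn ψ
        · intro k _; simpa using hψD k
        · exact fun a _ b _ hab => hmono.injective hab
      simpa [Set.ncard_eq_toFinset_card D hD] using this
    omega
  have hZfin : Z.Finite := by
    by_contra hinf
    obtain ⟨t, htZ, htf, htc⟩ := Set.Infinite.exists_subset_ncard_eq hinf (D.ncard + 2)
    have := key htf.toFinset (by simpa using htZ)
    rw [← Set.ncard_eq_toFinset_card t htf] at this
    omega
  refine ⟨hZfin, ?_⟩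
  have := key hZfin.toFinset (by simp)
  rwa [← Set.ncard_eq_toFinset_card Z hZfin] at this

lemma expsum_zeros : ∀ (nn : ℕ) (s : Finset ℝ) (c : ℝ → ℝ), s.card ≤ nn →
    (∃ m ∈ s, c m ≠ 0) →
    {t : ℝ | ∑ m ∈ s, c m * Real.exp (m * t) = 0}.Finite ∧
    {t : ℝ | ∑ m ∈ s, c m * Real.exp (m * t) = 0}.ncard ≤ s.card - 1 := by
  intro nn
  induction nn with
  | zero =>
    intro s c hcard hc
    obtain ⟨m, hm, _⟩ := hc
    exact absurd (Finset.card_pos.2 ⟨m, hm⟩) (by omega)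
  | succ n ih =>
    intro s c hcard hc
    obtain ⟨m0, hm0, hc0⟩ := hc
    set Z : Set ℝ := {t : ℝ | ∑ m ∈ s, c m * Real.exp (m * t) = 0} with hZ
    set s' : Finset ℝ := (s.erase m0).image (fun m => m - m0) with hs'
    have hinjOn : Set.InjOn (fun m => m - m0) (s.erase m0) := fun a _ b _ h => by
      simpa using h
    have hs'card : s'.card = s.card - 1 := by
      rw [hs', Finset.card_image_of_injOn hinjOn, Finset.card_erase_of_mem hm0]
    set c' : ℝ → ℝ := fun ν => c (ν + m0) * ν with hc'
    have hsum' : ∀ t : ℝ, ∑ ν ∈ s', c' ν * Real.exp (ν * t)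
        = ∑ m ∈ s, c m * (m - m0) * Real.exp ((m - m0) * t) := by
      intro t
      rw [hs', Finset.sum_image (fun a ha b hb h => hinjOn ha hb h),
        ← Finset.sum_erase (f := fun m => c m * (m - m0) * Real.exp ((m - m0) * t))
          s (a := m0) (by simp)]
      apply Finset.sum_congr rfl
      intro m hm
      have : m - m0 + m0 = m := by ring
      simp only [hc', this]
    by_cases hall : ∀ ν ∈ s', c' ν = 0
    · -- all other coefficients vanish: f t = c m0 * exp(m0 t), no zeros
      have hcz : ∀ m ∈ s.erase m0, c m = 0 := by
        intro m hm
        have hmem : m - m0 ∈ s' := Finset.mem_image_of_mem _ hm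
        have := hall _ hmem
        have hne : m ≠ m0 := (Finset.mem_erase.1 hm).1
        have : c m * (m - m0) = 0 := by simpa [hc', sub_add_cancel] using this
        rcases mul_eq_zero.1 this with h1 | h1
        · exact h1
        · exact absurd (sub_eq_zero.1 h1) hne
      have hZempty : Z = ∅ := by
        ext t
        simp only [hZ, Set.mem_setOf_eq, Set.mem_empty_iff_false, iff_false]
        rw [Finset.sum_eq_single_of_mem m0 hm0 (fun m hm hne => by
          rw [hcz m (Finset.mem_erase.2 ⟨hne, hm⟩)]; ring)]
        exact mul_ne_zero hc0 (Real.exp_ne_zero _)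
      rw [hZempty]
      simp
    · push_neg at hall
      obtain ⟨ν0, hν0, hcν0⟩ := hall
      have hs'le : s'.card ≤ n := by
        have : 1 ≤ s.card := Finset.card_pos.2 ⟨m0, hm0⟩
        omega
      obtain ⟨hZ'fin, hZ'card⟩ := ih s' c' hs'le ⟨ν0, hν0, hcν0⟩
      set Z' : Set ℝ := {t : ℝ | ∑ ν ∈ s', c' ν * Real.exp (ν * t) = 0} with hZ'def
      -- G t := ∑ c m exp((m - m0) t); same zero set as Z, derivative zero set ⊆ Z'
      set G : ℝ → ℝ := fun t => ∑ m ∈ s, c m * Real.exp ((m - m0) * t) with hG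
      have hGzero : ∀ t, t ∈ Z ↔ G t = 0 := by
        intro t
        have hfact : G t = (∑ m ∈ s, c m * Real.exp (m * t)) * Real.exp (-(m0 * t)) := by
          rw [Finset.sum_mul]
          apply Finset.sum_congr rfl
          intro m _
          rw [mul_assoc, ← Real.exp_add]
          ring_nf
        constructor
        · intro ht; rw [hfact, ht]; ring
        · intro ht
          have := hfact ▸ ht
          rcases mul_eq_zero.1 this with h1 | h1
          · exact h1
          · exact absurd h1 (Real.exp_ne_zero _)
      have hderiv : ∀ t : ℝ, HasDerivAt G
          (∑ m ∈ s, c m * (m - m0) * Real.exp ((m - m0) * t)) t := by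
        intro t
        have : ∀ m ∈ s, HasDerivAt (fun t => c m * Real.exp ((m - m0) * t))
            (c m * (m - m0) * Real.exp ((m - m0) * t)) t := by
          intro m _
          have h1 : HasDerivAt (fun t : ℝ => (m - m0) * t) (m - m0) t := by
            simpa using (hasDerivAt_id t).const_mul (m - m0)
          have h2 := h1.exp
          have h3 : HasDerivAt (fun t => c m * Real.exp ((m - m0) * t))
              (c m * (Real.exp ((m - m0) * t) * (m - m0))) t := h2.const_mul (c m)
          convert h3 using 1
          ring
        simpa using HasDerivAt.fun_sum this
      have hbetween : ∀ a ∈ Z, ∀ b ∈ Z, a < b → ∃ d ∈ Z', a < d ∧ d < b := by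
        intro a ha b hb hab
        have hGa : G a = 0 := (hGzero a).1 ha
        have hGb : G b = 0 := (hGzero b).1 hb
        obtain ⟨d, hd, hd0⟩ := exists_hasDerivAt_eq_zero hab
          (fun x _ => ((hderiv x).continuousAt.continuousWithinAt))
          (hGa.trans hGb.symm) (fun x _ => hderiv x)
        refine ⟨d, ?_, hd.1, hd.2⟩
        rw [hZ'def]
        simp only [Set.mem_setOf_eq]
        rw [hsum' d]
        exact hd0
      obtain ⟨hZfin, hZcard⟩ := rolle_count Z Z' hZ'fin hbetween
      refine ⟨hZfin, ?_⟩
      have h1 : 1 ≤ s'.card := Finset.card_pos.2 ⟨ν0, hν0⟩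
      omega

lemma exp_zpow' (a : ℝ) (k : ℤ) : Real.exp a ^ k = Real.exp (k * a) := by
  rw [← Real.rpow_intCast, Real.rpow_def_of_pos (Real.exp_pos a), Real.log_exp, mul_comm]

lemma ncard_biUnion_le' {α β : Type*} (t : Finset α) (f : α → Set β) :
    (⋃ a ∈ t, f a).ncard ≤ ∑ a ∈ t, (f a).ncard := by
  classical
  induction t using Finset.induction_on with
  | empty => simp
  | @insert a s h ih =>
    rw [Finset.set_biUnion_insert, Finset.sum_insert h]
    exact le_trans (Set.ncard_union_le _ _) (by omega)

/-- Evaluation of a real Laurent polynomial (given by its finitely supported coefficient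
function) at a point of `ℝⁿ`. -/
noncomputable def realLaurentEval (n : ℕ) (P : (Fin n → ℤ) →₀ ℝ) (x : Fin n → ℝ) : ℝ :=
  ∑ α ∈ P.support, P α * ∏ i, x i ^ α i

theorem stmt9 (n : ℕ) (hn : 1 ≤ n) (P : (Fin n → ℤ) →₀ ℝ) (hP : P ≠ 0)
    -- the real stratum of the amoeba: image of the real points of `{P = 0}` under `Log`
    (AR : Set (Fin n → ℝ))
    (hAR : AR = (fun (x : Fin n → ℝ) (i : Fin n) => Real.log |x i|) ''
      {x | (∀ i, x i ≠ 0) ∧ realLaurentEval n P x = 0})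
    -- `N = 2 ^ κ_M` : the number of sign patterns `α ↦ ε ^ α` on the support of `P`
    (N : ℕ)
    (hN : N = Set.ncard {g : {α // α ∈ P.support} → ℝ |
      ∃ ε : Fin n → ℝ, (∀ i, ε i = 1 ∨ ε i = -1) ∧ ∀ α, g α = ∏ i, ε i ^ (α.1 i)})
    -- a line whose direction vector can be chosen integral
    (u : Fin n → ℝ) (w : Fin n → ℤ) (hw : w ≠ 0)
    (L : Set (Fin n → ℝ))
    (hL : L = Set.range fun t : ℝ => u + t • fun i => (w i : ℝ))
    (hfin : (L ∩ AR).Finite) :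
    (L ∩ AR).ncard ≤ N * (P.support.card - 1) := by
  classical
  obtain ⟨i0, hi0⟩ : ∃ i, w i ≠ 0 := by
    by_contra h; push_neg at h; exact hw (funext h)
  set φ : ℝ → (Fin n → ℝ) := fun t => u + t • fun i => (w i : ℝ) with hφ
  have hφapp : ∀ t i, φ t i = u i + t * (w i : ℝ) := fun t i => by
    simp [hφ]
  have hφinj : Function.Injective φ := by
    intro t t' h
    have h1 := congrFun h i0
    rw [hφapp, hφapp] at h1
    have h2 : t * (w i0 : ℝ) = t' * w i0 := by linarith
    exact mul_right_cancel₀ (by exact_mod_cast hi0) h2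
  set pat : (Fin n → ℝ) → ({α // α ∈ P.support} → ℝ) :=
    fun ε α => ∏ i, ε i ^ (α.1 i) with hpat
  set E : Set (Fin n → ℝ) := {ε | ∀ i, ε i = 1 ∨ ε i = -1} with hE
  set Gs : Set ({α // α ∈ P.support} → ℝ) := {g | ∃ ε : Fin n → ℝ,
    (∀ i, ε i = 1 ∨ ε i = -1) ∧ ∀ α, g α = ∏ i, ε i ^ (α.1 i)} with hGs
  have hEfin : E.Finite := by
    have hsub : E ⊆ Set.pi Set.univ (fun _ : Fin n => ({1, -1} : Set ℝ)) := by
      intro ε hε i _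
      rcases hε i with h | h <;> simp [h]
    exact (Set.Finite.pi (fun i => (Set.finite_singleton (-1)).insert 1)).subset hsub
  have hGsfin : Gs.Finite := by
    have hsub : Gs ⊆ pat '' E := by
      rintro g ⟨ε, hε, hg⟩
      exact ⟨ε, hε, (funext fun α => (hg α).symm)⟩
    exact (hEfin.image pat).subset hsub
  set f : (Fin n → ℝ) → ℝ → ℝ := fun ε t => ∑ α ∈ P.support,
    P α * (∏ i, ε i ^ (α i)) * Real.exp (∑ i, (α i : ℝ) * (u i + t * (w i : ℝ))) with hf
  -- evaluation identity
  have heval : ∀ (ε : Fin n → ℝ) (t : ℝ),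
      realLaurentEval n P (fun i => ε i * Real.exp (u i + t * (w i : ℝ))) = f ε t := by
    intro ε t
    unfold realLaurentEval
    apply Finset.sum_congr rfl
    intro α _
    have hprod : ∏ i, (ε i * Real.exp (u i + t * (w i : ℝ))) ^ (α i)
        = (∏ i, ε i ^ (α i)) * Real.exp (∑ i, (α i : ℝ) * (u i + t * (w i : ℝ))) := by
      rw [Real.exp_sum, ← Finset.prod_mul_distrib]
      apply Finset.prod_congr rfl
      intro i _
      rw [mul_zpow, exp_zpow']
    rw [hprod]; ring
  -- backward: a zero of f ε gives a point of L ∩ AR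
  have hback : ∀ ε ∈ E, ∀ t : ℝ, f ε t = 0 → φ t ∈ L ∩ AR := by
    intro ε hε t hft
    constructor
    · rw [hL]; exact ⟨t, rfl⟩
    · rw [hAR]
      refine ⟨fun i => ε i * Real.exp (u i + t * (w i : ℝ)), ⟨?_, ?_⟩, ?_⟩
      · intro i
        have : ε i ≠ 0 := by rcases hε i with h | h <;> rw [h] <;> norm_num
        exact mul_ne_zero this (Real.exp_ne_zero _)
      · rw [heval]; exact hft
      · funext i
        dsimp only
        have habs : |ε i * Real.exp (u i + t * (w i : ℝ))| = Real.exp (u i + t * (w i : ℝ)) := by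
          rw [abs_mul, abs_of_pos (Real.exp_pos _)]
          rcases hε i with h | h <;> simp [h]
        rw [habs, Real.log_exp, hφapp]
  -- forward: a point of L ∩ AR comes from a zero of some f ε, ε ∈ E
  have hfwd : ∀ t : ℝ, φ t ∈ AR → ∃ ε ∈ E, f ε t = 0 := by
    intro t hx
    rw [hAR] at hx
    obtain ⟨y, ⟨hy0, hyP⟩, hylog⟩ := hx
    set ε : Fin n → ℝ := fun i => if 0 < y i then 1 else -1 with hεdef
    have hεE : ε ∈ E := by
      intro i; by_cases h : 0 < y i <;> simp [hεdef, h]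
    refine ⟨ε, hεE, ?_⟩
    have hyeq : y = fun i => ε i * Real.exp (u i + t * (w i : ℝ)) := by
      funext i
      have hlog : Real.log |y i| = u i + t * (w i : ℝ) := by
        have h2 := congrFun hylog i
        dsimp only at h2
        rw [hφapp] at h2
        exact h2
      have habs : |y i| = Real.exp (u i + t * (w i : ℝ)) := by
        rw [← hlog, Real.exp_log (abs_pos.2 (hy0 i))]
      by_cases h : 0 < y i
      · simp only [hεdef, if_pos h, one_mul, ← habs]
        exact (abs_of_pos h).symm
      · have hneg : y i < 0 := lt_of_le_of_ne (le_of_not_gt h) (hy0 i)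
        simp only [hεdef, if_neg h, ← habs]
        rw [abs_of_neg hneg]; ring
    rw [← heval ε t, ← hyeq]
    exact hyP
  -- zero sets are finite
  have hZfin : ∀ ε ∈ E, {t : ℝ | f ε t = 0}.Finite := by
    intro ε hε
    have hsub : φ '' {t : ℝ | f ε t = 0} ⊆ L ∩ AR := by
      rintro x ⟨t, ht, rfl⟩
      exact hback ε hε t ht
    exact Set.Finite.of_finite_image (hfin.subset hsub) hφinj.injOn
  -- zero sets are small
  have hZcard : ∀ ε ∈ E, {t : ℝ | f ε t = 0}.ncard ≤ P.support.card - 1 := by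
    intro ε hε
    set μ : (Fin n → ℤ) → ℝ := fun α => ∑ i, (α i : ℝ) * (w i : ℝ) with hμ
    set s : Finset ℝ := P.support.image μ with hs
    set C : ℝ → ℝ := fun m => ∑ α ∈ P.support.filter (fun α => μ α = m),
      P α * (∏ i, ε i ^ (α i)) * Real.exp (∑ i, (α i : ℝ) * u i) with hC
    have hre : ∀ t : ℝ, f ε t = ∑ m ∈ s, C m * Real.exp (m * t) := by
      intro t
      have hsplit : ∀ α : Fin n → ℤ, (∑ i, (α i : ℝ) * (u i + t * (w i : ℝ)))
          = (∑ i, (α i : ℝ) * u i) + μ α * t := by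
        intro α
        rw [hμ, Finset.sum_mul, ← Finset.sum_add_distrib]
        exact Finset.sum_congr rfl fun i _ => by ring
      calc f ε t = ∑ α ∈ P.support,
          (P α * (∏ i, ε i ^ (α i)) * Real.exp (∑ i, (α i : ℝ) * u i))
            * Real.exp (μ α * t) := by
            apply Finset.sum_congr rfl
            intro α _
            rw [hsplit α, Real.exp_add]
            ring
        _ = ∑ m ∈ s, ∑ α ∈ P.support.filter (fun α => μ α = m),
          (P α * (∏ i, ε i ^ (α i)) * Real.exp (∑ i, (α i : ℝ) * u i))
            * Real.exp (μ α * t) :=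
            (Finset.sum_fiberwise_of_maps_to (fun α hα => Finset.mem_image_of_mem μ hα) _).symm
        _ = ∑ m ∈ s, C m * Real.exp (m * t) := by
            apply Finset.sum_congr rfl
            intro m hm
            rw [hC, Finset.sum_mul]
            apply Finset.sum_congr rfl
            intro α hα
            rw [(Finset.mem_filter.1 hα).2]
    by_cases hCz : ∀ m ∈ s, C m = 0
    · exfalso
      have : {t : ℝ | f ε t = 0} = Set.univ := by
        ext t
        simp only [Set.mem_setOf_eq, Set.mem_univ, iff_true]
        rw [hre t]
        exact Finset.sum_eq_zero fun m hm => by rw [hCz m hm, zero_mul]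
      exact Set.infinite_univ (this ▸ hZfin ε hε)
    · push_neg at hCz
      obtain ⟨m, hm, hCm⟩ := hCz
      have hset : {t : ℝ | f ε t = 0} = {t : ℝ | ∑ m ∈ s, C m * Real.exp (m * t) = 0} := by
        ext t; simp only [Set.mem_setOf_eq]; rw [hre t]
      obtain ⟨_, hcard⟩ := expsum_zeros s.card s C le_rfl ⟨m, hm, hCm⟩
      rw [hset]
      have : s.card ≤ P.support.card := Finset.card_image_le
      omega
  -- choose a representative sign vector for each pattern
  have hrepex : ∀ g : {α // α ∈ P.support} → ℝ, ∃ ε, ε ∈ E ∧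
      (g ∈ Gs → ∀ α : {α // α ∈ P.support}, g α = ∏ i, ε i ^ (α.1 i)) := by
    intro g
    by_cases hg : g ∈ Gs
    · obtain ⟨ε, hε, hgε⟩ := hg
      exact ⟨ε, hε, fun _ => hgε⟩
    · exact ⟨fun _ => 1, fun i => Or.inl rfl, fun h => absurd h hg⟩
  choose r hrE hrg using hrepex
  -- covering of L ∩ AR
  have hcover : L ∩ AR ⊆ ⋃ g ∈ hGsfin.toFinset, φ '' {t : ℝ | f (r g) t = 0} := by
    intro x hx
    have hx1 := hx.1
    rw [hL] at hx1
    obtain ⟨t, rfl⟩ := hx1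
    obtain ⟨ε, hεE, hεf⟩ := hfwd t hx.2
    have hgGs : pat ε ∈ Gs := ⟨ε, hεE, fun α => rfl⟩
    have hfr : f (r (pat ε)) t = 0 := by
      have heq : f (r (pat ε)) t = f ε t := by
        simp only [hf]
        apply Finset.sum_congr rfl
        intro α hα
        have h1 : pat ε ⟨α, hα⟩ = ∏ i, (r (pat ε)) i ^ (α i) := hrg (pat ε) hgGs ⟨α, hα⟩
        have h2 : pat ε ⟨α, hα⟩ = ∏ i, ε i ^ (α i) := rfl
        rw [← h1, h2]
      rw [heq]; exact hεf
    exact Set.mem_biUnion (hGsfin.mem_toFinset.2 hgGs) ⟨t, hfr, rfl⟩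
  have hUfin : (⋃ g ∈ hGsfin.toFinset, φ '' {t : ℝ | f (r g) t = 0}).Finite :=
    Set.Finite.biUnion (hGsfin.toFinset.finite_toSet)
      (fun g _ => (hZfin (r g) (hrE g)).image φ)
  calc (L ∩ AR).ncard
      ≤ (⋃ g ∈ hGsfin.toFinset, φ '' {t : ℝ | f (r g) t = 0}).ncard :=
        Set.ncard_le_ncard hcover hUfin
    _ ≤ ∑ g ∈ hGsfin.toFinset, (φ '' {t : ℝ | f (r g) t = 0}).ncard :=
        ncard_biUnion_le' _ _
    _ ≤ ∑ _g ∈ hGsfin.toFinset, (P.support.card - 1) := by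
        apply Finset.sum_le_sum
        intro g _
        exact le_trans (Set.ncard_image_le (hZfin (r g) (hrE g))) (hZcard (r g) (hrE g))
    _ = N * (P.support.card - 1) := by
        rw [Finset.sum_const, smul_eq_mul, hN, Set.ncard_eq_toFinset_card Gs hGsfin]
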